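/- With Leontief utilities, if a distribution q satisfies weak core fair share at a profile P, then q is Pareto efficient at P. -/

import Mathlib

/-- Leontief utility of an agent with peak `p` at distribution `q`:
the minimum of `q j / p j` over alternatives `j` with `p j > 0`. -/
noncomputable def leontief {m : ℕ} (p q : Fin m → ℝ) : ℝ :=
  sInf {x : ℝ | ∃ j, 0 < p j ∧ x = q j / p j}

/-- `q` satisfies core fair share at profile `P` (with Leontief utilities). -/
def CoreFairShare {m n : ℕ} (P : Fin n → Fin m → ℝ) (q : Fin m → ℝ) : Prop :=
  ¬ ∃ (N' : Finset (Fin n)) (q' : Fin m → ℝ), N'.Nonempty ∧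
      q' ∈ stdSimplex ℝ (Fin m) ∧
      ∀ q'' ∈ stdSimplex ℝ (Fin m),
        (∀ i ∈ N', leontief (P i) q ≤
          leontief (P i) (((N'.card : ℝ) / (n : ℝ)) • q' +
            (1 - (N'.card : ℝ) / (n : ℝ)) • q'')) ∧
        (∃ i ∈ N', leontief (P i) q <
          leontief (P i) (((N'.card : ℝ) / (n : ℝ)) • q' +
            (1 - (N'.card : ℝ) / (n : ℝ)) • q''))

/-- `q` satisfies weak core fair share at profile `P` (with Leontief utilities). -/
def WeakCoreFairShare {m n : ℕ} (P : Fin n → Fin m → ℝ) (q : Fin m → ℝ) : Prop :=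
  ¬ ∃ (N' : Finset (Fin n)) (q' : Fin m → ℝ), N'.Nonempty ∧
      q' ∈ stdSimplex ℝ (Fin m) ∧
      ∀ q'' ∈ stdSimplex ℝ (Fin m), ∀ i ∈ N',
        leontief (P i) q <
          leontief (P i) (((N'.card : ℝ) / (n : ℝ)) • q' +
            (1 - (N'.card : ℝ) / (n : ℝ)) • q'')

namespace LeontiefAux

lemma lset_finite {m : ℕ} (p q : Fin m → ℝ) :
    {x : ℝ | ∃ j, 0 < p j ∧ x = q j / p j}.Finite := by
  have : {x : ℝ | ∃ j, 0 < p j ∧ x = q j / p j} ⊆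
      (fun j => q j / p j) '' Set.univ := by
    rintro x ⟨j, hj, rfl⟩; exact ⟨j, trivial, rfl⟩
  exact Set.Finite.subset ((Set.finite_univ).image _) this

lemma lset_nonempty {m : ℕ} {p : Fin m → ℝ} (hp : p ∈ stdSimplex ℝ (Fin m))
    (q : Fin m → ℝ) :
    {x : ℝ | ∃ j, 0 < p j ∧ x = q j / p j}.Nonempty := by
  obtain ⟨j, hj⟩ : ∃ j, p j ≠ 0 := by
    by_contra h
    push_neg at h
    have := hp.2
    simp [h] at this
  exact ⟨q j / p j, j, lt_of_le_of_ne (hp.1 j) (Ne.symm hj), rfl⟩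

lemma leontief_mem {m : ℕ} {p : Fin m → ℝ} (hp : p ∈ stdSimplex ℝ (Fin m))
    (q : Fin m → ℝ) : ∃ j, 0 < p j ∧ leontief p q = q j / p j :=
  (lset_nonempty hp q).csInf_mem (lset_finite p q)

lemma leontief_le {m : ℕ} (p q : Fin m → ℝ) {j : Fin m} (hj : 0 < p j) :
    leontief p q ≤ q j / p j :=
  csInf_le (lset_finite p q).bddBelow ⟨j, hj, rfl⟩

lemma lt_leontief {m : ℕ} {p : Fin m → ℝ} (hp : p ∈ stdSimplex ℝ (Fin m))
    {q : Fin m → ℝ} {c : ℝ} (h : ∀ j, 0 < p j → c < q j / p j) :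
    c < leontief p q := by
  obtain ⟨j, hj, he⟩ := leontief_mem hp q
  rw [he]; exact h j hj

lemma leontief_nonneg {m : ℕ} {p : Fin m → ℝ} (hp : p ∈ stdSimplex ℝ (Fin m))
    {q : Fin m → ℝ} (hqn : ∀ j, 0 ≤ q j) : 0 ≤ leontief p q := by
  obtain ⟨j, hj, he⟩ := leontief_mem hp q
  rw [he]; exact div_nonneg (hqn j) hj.le

/-- If `q'` Pareto dominates `q`, then some `qs` strictly improves every agent. -/
lemma strict_dominator {m n : ℕ}
    (P : Fin n → Fin m → ℝ) (hP : ∀ i, P i ∈ stdSimplex ℝ (Fin m))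
    (q : Fin m → ℝ) (hq : q ∈ stdSimplex ℝ (Fin m))
    (hdom : ∃ q' ∈ stdSimplex ℝ (Fin m),
        (∀ i, leontief (P i) q ≤ leontief (P i) q') ∧
        (∃ i, leontief (P i) q < leontief (P i) q')) :
    ∃ qs ∈ stdSimplex ℝ (Fin m), ∀ i, leontief (P i) q < leontief (P i) qs := by
  obtain ⟨q', hq', hle, i0, hi0⟩ := hdom
  have hn : Nonempty (Fin n) := ⟨i0⟩
  have hU : (Finset.univ : Finset (Fin n)).Nonempty := Finset.univ_nonempty
  have hm : 0 < m := by
    rcases Nat.eq_zero_or_pos m with h | h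
    · exfalso; have := hq.2; subst h; simp at this
    · exact h
  set d : Fin m → ℝ := fun j => Finset.univ.sup' hU (fun i => leontief (P i) q * P i j) with hd
  have hdle : ∀ i j, leontief (P i) q * P i j ≤ d j := by
    intro i j
    rw [hd]
    exact Finset.le_sup' (fun i => leontief (P i) q * P i j) (Finset.mem_univ i)
  have hd0 : ∀ j, 0 ≤ d j := by
    intro j
    refine le_trans ?_ (hdle i0 j)
    exact mul_nonneg (leontief_nonneg (hP i0) (fun j => hq.1 j)) ((hP i0).1 j)
  -- `d ≤ r` pointwise for any simplex point `r` weakly dominating `q`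
  have key : ∀ (r : Fin m → ℝ), r ∈ stdSimplex ℝ (Fin m) →
      (∀ i, leontief (P i) q ≤ leontief (P i) r) → ∀ j, d j ≤ r j := by
    intro r hr hur j
    refine Finset.sup'_le _ _ (fun i _ => ?_)
    rcases lt_or_eq_of_le ((hP i).1 j) with hpij | hpij
    · have h1 : leontief (P i) r ≤ r j / P i j := leontief_le _ _ hpij
      have h2 : leontief (P i) q ≤ r j / P i j := le_trans (hur i) h1
      calc leontief (P i) q * P i j ≤ (r j / P i j) * P i j :=
            mul_le_mul_of_nonneg_right h2 hpij.le
        _ = r j := by field_simp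
    · rw [← hpij]; simpa using hr.1 j
  have hdq : ∀ j, d j ≤ q j := key q hq (fun i => le_refl _)
  have hdq' : ∀ j, d j ≤ q' j := key q' hq' hle
  have hsum : ∑ j, d j < 1 := by
    rcases lt_or_eq_of_le (by
      calc ∑ j, d j ≤ ∑ j, q j := Finset.sum_le_sum (fun j _ => hdq j)
        _ = 1 := hq.2) with h | h
    · exact h
    · exfalso
      have hq'sum : ∑ j, d j = ∑ j, q' j := by rw [h, hq'.2]
      have hqsum : ∑ j, d j = ∑ j, q j := by rw [h, hq.2]
      have e1 : ∀ j ∈ Finset.univ, d j = q j :=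
        (Finset.sum_eq_sum_iff_of_le (fun j _ => hdq j)).mp hqsum
      have e2 : ∀ j ∈ Finset.univ, d j = q' j :=
        (Finset.sum_eq_sum_iff_of_le (fun j _ => hdq' j)).mp hq'sum
      have : q = q' := by
        funext j
        rw [← e1 j (Finset.mem_univ j), e2 j (Finset.mem_univ j)]
      rw [this] at hi0
      exact lt_irrefl _ hi0
  set ε : ℝ := (1 - ∑ j, d j) / m with hε
  have hεpos : 0 < ε := div_pos (by linarith) (by exact_mod_cast hm)
  refine ⟨fun j => d j + ε, ⟨fun j => add_nonneg (hd0 j) hεpos.le, ?_⟩, ?_⟩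
  · rw [Finset.sum_add_distrib]
    simp only [Finset.sum_const, Finset.card_univ, Fintype.card_fin, nsmul_eq_mul]
    rw [hε]
    field_simp
    ring
  · intro i
    refine lt_leontief (hP i) (fun j hpij => ?_)
    rw [lt_div_iff₀ hpij]
    have := hdle i j
    nlinarith

end LeontiefAux

/-- with Leontief utilities, weak core fair share implies Pareto
efficiency. -/
theorem weak_cfs_implies_efficiency {m n : ℕ}
    (P : Fin n → Fin m → ℝ) (hP : ∀ i, P i ∈ stdSimplex ℝ (Fin m))
    (q : Fin m → ℝ) (hq : q ∈ stdSimplex ℝ (Fin m))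
    (hwcfs : WeakCoreFairShare P q) :
    ¬ ∃ q' ∈ stdSimplex ℝ (Fin m),
        (∀ i, leontief (P i) q ≤ leontief (P i) q') ∧
        (∃ i, leontief (P i) q < leontief (P i) q') := by
  intro hdom
  obtain ⟨qs, hqs, hstrict⟩ := LeontiefAux.strict_dominator P hP q hq hdom
  obtain ⟨q', hq', hle, i0, hi0⟩ := hdom
  have hn : (n : ℝ) ≠ 0 := by
    have : 0 < n := Fin.pos i0
    exact_mod_cast this.ne'
  apply hwcfs
  refine ⟨Finset.univ, qs, @Finset.univ_nonempty (Fin n) _ ⟨i0⟩, hqs, ?_⟩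
  intro q'' hq'' i _
  have hcard : ((Finset.univ : Finset (Fin n)).card : ℝ) / (n : ℝ) = 1 := by
    rw [Finset.card_univ, Fintype.card_fin]
    field_simp
  rw [hcard]
  have : (1 : ℝ) • qs + (1 - 1 : ℝ) • q'' = qs := by
    simp
  rw [this]
  exact hstrict i
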